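/- Let h ∈ ℝ^N, let H be the circular convolution matrix of h, and relabel the Fourier coefficients so that |ĥ₀| ≥ |ĥ₁| ≥ … ≥ |ĥ_{N−1}|. Then for every K with 1 ≤ K ≤ N there exist an orthogonal projection matrix P of rank K and a K × K submatrix B of PH such that |det(B)|^{1/K} ≥ e^{−1/2} · √K · |ĥ_{K−1}|. -/

import Mathlib

open Finset
open scoped ENNReal NNReal

noncomputable section

/-- The normalized DFT matrix `(F_N)_{m,n} = N^{-1/2} exp(-2π i m n / N)`. -/
def dftMatrix (N : ℕ) : Matrix (Fin N) (Fin N) ℂ :=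
  Matrix.of fun m n => ((Real.sqrt N : ℝ) : ℂ)⁻¹ *
    Complex.exp (-(2 * (Real.pi : ℂ) * Complex.I * ((m : ℕ) : ℂ) * ((n : ℕ) : ℂ)) / (N : ℂ))

/-- The normalized DFT (Fourier coefficients) of a real vector: `ĥ = F_N h`. -/
def dftCoeff {N : ℕ} (h : Fin N → ℝ) : Fin N → ℂ :=
  (dftMatrix N).mulVec fun n => ((h n : ℝ) : ℂ)

open Matrix Complex
namespace ProjAux

def zeta (N : ℕ) : ℂ := Complex.exp (-(2 * Real.pi * Complex.I) / N)

lemma dftMatrix_apply (N : ℕ) (m n : Fin N) :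
    dftMatrix N m n = ((Real.sqrt N : ℝ) : ℂ)⁻¹ * zeta N ^ ((m : ℕ) * (n : ℕ)) := by
  rw [dftMatrix, Matrix.of_apply, zeta, ← Complex.exp_nat_mul]
  congr 1
  push_cast
  ring

lemma zeta_pow_N {N : ℕ} (hN : N ≠ 0) : zeta N ^ N = 1 := by
  rw [zeta, ← Complex.exp_nat_mul]
  have : (N : ℂ) * (-(2 * Real.pi * Complex.I) / N) = (-1 : ℤ) * (2 * Real.pi * Complex.I) := by
    have : (N : ℂ) ≠ 0 := Nat.cast_ne_zero.mpr hN
    field_simp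
    ring
  rw [this, Complex.exp_int_mul_two_pi_mul_I]

lemma zeta_pow_mod {N : ℕ} (hN : N ≠ 0) (a : ℕ) : zeta N ^ a = zeta N ^ (a % N) := by
  conv_lhs => rw [← Nat.div_add_mod a N]
  rw [pow_add, pow_mul, zeta_pow_N hN, one_pow, one_mul]

lemma zeta_pow_congr {N : ℕ} (hN : N ≠ 0) {a b : ℕ} (hab : a % N = b % N) :
    zeta N ^ a = zeta N ^ b := by
  rw [zeta_pow_mod hN a, zeta_pow_mod hN b, hab]

lemma conj_zeta (N : ℕ) : (starRingEnd ℂ) (zeta N) = Complex.exp ((2 * Real.pi * Complex.I) / N) := by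
  rw [zeta, ← Complex.exp_conj]
  congr 1
  simp [map_div₀, map_ofNat]

lemma zeta_mul_conj {N : ℕ} : zeta N * (starRingEnd ℂ) (zeta N) = 1 := by
  rw [conj_zeta, zeta, ← Complex.exp_add]
  rw [show -(2 * (Real.pi:ℂ) * Complex.I) / N + 2 * (Real.pi:ℂ) * Complex.I / N = 0 by ring]
  exact Complex.exp_zero

end ProjAux

namespace ProjAux

lemma dft_mul_conjTranspose {N : ℕ} (hN : N ≠ 0) :
    dftMatrix N * (dftMatrix N)ᴴ = 1 := by
  have hNC : (N : ℂ) ≠ 0 := Nat.cast_ne_zero.mpr hN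
  have hs : ((Real.sqrt N : ℝ) : ℂ) ≠ 0 := by
    simp only [ne_eq, Complex.ofReal_eq_zero]
    positivity
  have hss : ((Real.sqrt N : ℝ) : ℂ) * ((Real.sqrt N : ℝ) : ℂ) = (N : ℂ) := by
    rw [← Complex.ofReal_mul, Real.mul_self_sqrt (Nat.cast_nonneg N)]
    simp
  ext m n
  rw [Matrix.mul_apply, Matrix.one_apply]
  have key : ∀ k : Fin N, dftMatrix N m k * (dftMatrix N)ᴴ k n =
      (((Real.sqrt N : ℝ) : ℂ) * ((Real.sqrt N : ℝ) : ℂ))⁻¹ *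
        (zeta N ^ (m : ℕ) * (starRingEnd ℂ) (zeta N) ^ (n : ℕ)) ^ (k : ℕ) := by
    intro k
    rw [Matrix.conjTranspose_apply, dftMatrix_apply, dftMatrix_apply]
    simp only [star_mul', star_pow, star_inv₀, Complex.star_def, Complex.conj_ofReal]
    rw [mul_pow, ← pow_mul, ← pow_mul]
    ring
  simp only [key]
  rw [← Finset.mul_sum]
  set u : ℂ := zeta N ^ (m : ℕ) * (starRingEnd ℂ) (zeta N) ^ (n : ℕ) with hu
  rcases eq_or_ne m n with rfl | hmn
  · have : u = 1 := by
      rw [hu, ← mul_pow, zeta_mul_conj, one_pow]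
    rw [if_pos rfl]
    simp only [this, one_pow]
    rw [Finset.sum_const, Finset.card_univ, Fintype.card_fin, hss, nsmul_eq_mul, mul_one,
      inv_mul_cancel₀ hNC]
  · have hu1 : u ≠ 1 := by
      intro hcon
      have hexp : u = Complex.exp ((((n : ℕ) : ℤ) - ((m : ℕ) : ℤ)) * (2 * Real.pi * Complex.I) / N) := by
        rw [hu, conj_zeta, zeta, ← Complex.exp_nat_mul, ← Complex.exp_nat_mul, ← Complex.exp_add]
        congr 1
        push_cast
        ring
      rw [hexp, Complex.exp_eq_one_iff] at hcon
      obtain ⟨t, ht⟩ := hcon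
      have h2pi : (2 * (Real.pi : ℂ) * Complex.I) ≠ 0 := by
        simp [Real.pi_ne_zero, Complex.I_ne_zero]
      have : ((((n : ℕ) : ℤ) : ℂ) - (((m : ℕ) : ℤ) : ℂ)) = t * N := by
        field_simp at ht
        have h2 : ((((n:ℕ):ℤ):ℂ) - (((m:ℕ):ℤ):ℂ)) * (2 * Real.pi * Complex.I)
            = ((t : ℂ) * N) * (2 * Real.pi * Complex.I) := by
          push_cast at ht ⊢
          linear_combination (2 * (Real.pi:ℂ) * Complex.I) * ht
        exact mul_right_cancel₀ h2pi h2
      have hz : ((n : ℕ) : ℤ) - ((m : ℕ) : ℤ) = t * N := by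
        exact_mod_cast this
      have hdvd : (N : ℤ) ∣ ((n : ℕ) : ℤ) - ((m : ℕ) : ℤ) := ⟨t, by linarith [hz]⟩
      have hlt : |((n : ℕ) : ℤ) - ((m : ℕ) : ℤ)| < N := by
        have hm := m.isLt; have hn := n.isLt
        rw [abs_lt]
        omega
      have hne : ((n : ℕ) : ℤ) - ((m : ℕ) : ℤ) ≠ 0 := by
        have : (m : ℕ) ≠ (n : ℕ) := fun hc => hmn (Fin.ext hc)
        omega
      have := Int.le_of_dvd (abs_pos.mpr hne) ((dvd_abs _ _).mpr hdvd)
      omega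
    have huN : u ^ N = 1 := by
      rw [hu, mul_pow, ← pow_mul, ← pow_mul, mul_comm ((m:ℕ)) N, mul_comm ((n:ℕ)) N,
        pow_mul, pow_mul, ← map_pow, zeta_pow_N hN]
      simp
    have : ∑ k : Fin N, u ^ (k : ℕ) = 0 := by
      rw [Fin.sum_univ_eq_sum_range (fun k => u ^ k), geom_sum_eq hu1, huN]
      simp
    rw [this, if_neg hmn, mul_zero]

end ProjAux

namespace ProjAux

lemma dftCoeff_eq {N : ℕ} (h : Fin N → ℝ) (m : Fin N) :
    dftCoeff h m = ∑ k, dftMatrix N m k * ((h k : ℝ) : ℂ) := by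
  simp [dftCoeff, Matrix.mulVec, dotProduct]

lemma dft_mul_circulant {N : ℕ} [NeZero N] (h : Fin N → ℝ) (m n : Fin N) :
    ∑ k, dftMatrix N m k * ((h (k - n) : ℝ) : ℂ) =
      ((Real.sqrt N : ℝ) : ℂ) * dftCoeff h m * dftMatrix N m n := by
  have hN : N ≠ 0 := NeZero.ne N
  have hs : ((Real.sqrt N : ℝ) : ℂ) ≠ 0 := by
    have : (0:ℝ) < Real.sqrt N :=
      Real.sqrt_pos.mpr (by exact_mod_cast Nat.pos_of_ne_zero hN)
    simp only [ne_eq, Complex.ofReal_eq_zero]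
    exact ne_of_gt this
  have hval : ∀ k : Fin N, zeta N ^ ((m:ℕ) * ((k + n : Fin N) : ℕ)) =
      zeta N ^ ((m:ℕ)*(k:ℕ)) * zeta N ^ ((m:ℕ)*(n:ℕ)) := by
    intro k
    rw [← pow_add, ← mul_add]
    apply zeta_pow_congr hN
    have hv : ((k + n : Fin N) : ℕ) = ((k:ℕ) + (n:ℕ)) % N := Fin.val_add k n
    rw [hv]
    exact (Nat.mod_modEq _ _).mul_left (m:ℕ)
  rw [← Equiv.sum_comp (Equiv.addRight n) (fun k => dftMatrix N m k * ((h (k - n) : ℝ) : ℂ))]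
  rw [dftCoeff_eq, Finset.mul_sum, Finset.sum_mul]
  apply Finset.sum_congr rfl
  intro k _
  simp only [Equiv.coe_addRight, add_sub_cancel_right]
  rw [dftMatrix_apply, dftMatrix_apply, dftMatrix_apply, hval k]
  field_simp

end ProjAux

namespace ProjAux

lemma sum_normSq_det {K N : ℕ} (A : Matrix (Fin K) (Fin N) ℂ) (hA : A * Aᴴ = 1) :
    ∑ f : Fin K → Fin N, Complex.normSq ((A.submatrix id f).det) = (Nat.factorial K : ℝ) := by
  classical
  have key : ∑ f : Fin K → Fin N,
      ((A.submatrix id f).det * (starRingEnd ℂ) ((A.submatrix id f).det))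
        = (Nat.factorial K : ℂ) := by
    have hdet : ∀ f : Fin K → Fin N, (A.submatrix id f).det
        = ∑ σ : Equiv.Perm (Fin K), ((Equiv.Perm.sign σ : ℤ) : ℂ) * ∏ i, A (σ i) (f i) := by
      intro f
      simp [Matrix.det_apply', Matrix.submatrix_apply]
    calc ∑ f : Fin K → Fin N, ((A.submatrix id f).det * (starRingEnd ℂ) ((A.submatrix id f).det))
        = ∑ f : Fin K → Fin N, ∑ σ : Equiv.Perm (Fin K), ∑ τ : Equiv.Perm (Fin K),
            (((Equiv.Perm.sign σ : ℤ) : ℂ) * ((Equiv.Perm.sign τ : ℤ) : ℂ)) *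
              ∏ i, (A (σ i) (f i) * (starRingEnd ℂ) (A (τ i) (f i))) := by
          refine Finset.sum_congr rfl fun f _ => ?_
          rw [hdet f, map_sum, Finset.sum_mul_sum]
          refine Finset.sum_congr rfl fun σ _ => Finset.sum_congr rfl fun τ _ => ?_
          rw [_root_.map_mul, map_prod, Finset.prod_mul_distrib]
          have : (starRingEnd ℂ) ((Equiv.Perm.sign τ : ℤ) : ℂ) = ((Equiv.Perm.sign τ : ℤ) : ℂ) := by
            simp
          rw [this]
          ring
      _ = ∑ σ : Equiv.Perm (Fin K), ∑ τ : Equiv.Perm (Fin K),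
            (((Equiv.Perm.sign σ : ℤ) : ℂ) * ((Equiv.Perm.sign τ : ℤ) : ℂ)) *
              ∑ f : Fin K → Fin N, ∏ i, (A (σ i) (f i) * (starRingEnd ℂ) (A (τ i) (f i))) := by
          rw [Finset.sum_comm]
          refine Finset.sum_congr rfl fun σ _ => ?_
          rw [Finset.sum_comm]
          exact Finset.sum_congr rfl fun τ _ => (Finset.mul_sum _ _ _).symm
      _ = ∑ σ : Equiv.Perm (Fin K), ∑ τ : Equiv.Perm (Fin K),
            (((Equiv.Perm.sign σ : ℤ) : ℂ) * ((Equiv.Perm.sign τ : ℤ) : ℂ)) *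
              (if σ = τ then 1 else 0) := by
          refine Finset.sum_congr rfl fun σ _ => Finset.sum_congr rfl fun τ _ => ?_
          congr 1
          rw [← Fintype.prod_sum (fun i x => A (σ i) x * (starRingEnd ℂ) (A (τ i) x))]
          have hentry : ∀ i : Fin K, ∑ x : Fin N, A (σ i) x * (starRingEnd ℂ) (A (τ i) x)
              = (1 : Matrix (Fin K) (Fin K) ℂ) (σ i) (τ i) := by
            intro i
            rw [← hA, Matrix.mul_apply]
            exact Finset.sum_congr rfl fun x _ => by rw [Matrix.conjTranspose_apply]; rfl
          simp only [hentry, Matrix.one_apply]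
          rw [Finset.prod_boole]
          congr 1
          simp only [eq_iff_iff]
          constructor
          · intro hh; exact Equiv.ext fun x => hh x (Finset.mem_univ x)
          · intro hh i _; rw [hh]
      _ = (Nat.factorial K : ℂ) := by
          have hcol : ∀ σ : Equiv.Perm (Fin K),
              (∑ τ : Equiv.Perm (Fin K),
                (((Equiv.Perm.sign σ : ℤ) : ℂ) * ((Equiv.Perm.sign τ : ℤ) : ℂ)) *
                  (if σ = τ then 1 else 0)) = 1 := by
            intro σ
            simp only [mul_ite, mul_one, mul_zero]
            rw [Finset.sum_ite_eq]
            simp only [Finset.mem_univ, if_true]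
            rw [← Int.cast_mul, ← Units.val_mul, Int.units_mul_self]
            simp
          simp only [hcol]
          rw [Finset.sum_const, Finset.card_univ, Fintype.card_perm, Fintype.card_fin]
          simp
  have : ∀ f : Fin K → Fin N, (A.submatrix id f).det * (starRingEnd ℂ) ((A.submatrix id f).det)
      = ((Complex.normSq ((A.submatrix id f).det) : ℝ) : ℂ) := fun f => Complex.mul_conj _
  rw [Finset.sum_congr rfl (fun f _ => this f)] at key
  rw [← Complex.ofReal_sum] at key
  exact_mod_cast key

end ProjAux

namespace ProjAux

lemma pow_le_exp_mul_factorial (K : ℕ) : (K:ℝ)^K ≤ Real.exp K * (Nat.factorial K : ℝ) := by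
  induction K with
  | zero => simp
  | succ k ih =>
    rcases Nat.eq_zero_or_pos k with rfl | hk
    · simpa using Real.one_le_exp (by norm_num : (0:ℝ) ≤ (1:ℝ))
    · have hkpos : (0:ℝ) < k := by exact_mod_cast hk
      have hstep : ((k:ℝ)+1)^k ≤ Real.exp 1 * (k:ℝ)^k := by
        have h1 : ((k:ℝ)+1) ≤ (k:ℝ) * Real.exp (1/(k:ℝ)) := by
          have h2 := Real.add_one_le_exp (1/(k:ℝ))
          calc ((k:ℝ)+1) = (k:ℝ) * (1/(k:ℝ)+1) := by field_simp; ring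
            _ ≤ (k:ℝ) * Real.exp (1/(k:ℝ)) :=
                mul_le_mul_of_nonneg_left h2 (le_of_lt hkpos)
        calc ((k:ℝ)+1)^k ≤ ((k:ℝ) * Real.exp (1/(k:ℝ)))^k :=
              pow_le_pow_left₀ (by positivity) h1 k
          _ = (k:ℝ)^k * Real.exp (1/(k:ℝ))^k := mul_pow _ _ _
          _ = (k:ℝ)^k * Real.exp 1 := by
              rw [← Real.exp_nat_mul]
              congr 1
              field_simp
          _ = Real.exp 1 * (k:ℝ)^k := mul_comm _ _
      have hfac : (Nat.factorial (k+1) : ℝ) = ((k:ℝ)+1) * (Nat.factorial k : ℝ) := by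
        rw [Nat.factorial_succ]
        push_cast
        ring
      have hexp : Real.exp ((k:ℕ)+1 : ℕ) = Real.exp 1 * Real.exp k := by
        push_cast
        rw [← Real.exp_add]
        ring_nf
      calc ((k+1:ℕ):ℝ)^(k+1) = ((k:ℝ)+1) * ((k:ℝ)+1)^k := by
            push_cast
            ring
        _ ≤ ((k:ℝ)+1) * (Real.exp 1 * (k:ℝ)^k) :=
            mul_le_mul_of_nonneg_left hstep (by positivity)
        _ ≤ ((k:ℝ)+1) * (Real.exp 1 * (Real.exp k * (Nat.factorial k : ℝ))) := by
            have := mul_le_mul_of_nonneg_left ih (le_of_lt (Real.exp_pos 1))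
            exact mul_le_mul_of_nonneg_left this (by positivity)
        _ = Real.exp ((k:ℕ)+1 : ℕ) * (Nat.factorial (k+1) : ℝ) := by
            rw [hexp, hfac]
            ring

end ProjAux


/-- for `h ∈ ℝ^N` with Fourier coefficients sorted so that
`|ĥ₀| ≥ … ≥ |ĥ_{N-1}|`, for every `1 ≤ K ≤ N` there are an orthogonal projection matrix
`P` of rank `K` (an ℓ₂-contraction) and a `K × K` submatrix `B` of `PH` with
`|det B|^{1/K} ≥ e^{-1/2} √K |ĥ_{K-1}|`, where `H` is the circular convolution matrix
of `h`. -/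
theorem projection_submatrix_det (N : ℕ) (h : Fin N → ℝ)
    (hmono : ∀ i j : Fin N, i ≤ j → ‖dftCoeff h j‖ ≤ ‖dftCoeff h i‖)
    (K : ℕ) (hK1 : 1 ≤ K) (hK2 : K ≤ N) :
    ∃ (L : ℕ) (P : Matrix (Fin L) (Fin N) ℂ),
      (∀ v : Fin N → ℂ, ∑ i, ‖P.mulVec v i‖ ^ 2 ≤ ∑ i, ‖v i‖ ^ 2) ∧
      P.rank = K ∧
      ∃ (r : Fin K → Fin L) (c : Fin K → Fin N),
        Function.Injective r ∧ Function.Injective c ∧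
        Real.exp (-(1 / 2)) * Real.sqrt K * ‖dftCoeff h ⟨K - 1, by omega⟩‖ ≤
          ‖((P * (Matrix.circulant h).map (fun a : ℝ => (a : ℂ))).submatrix r c).det‖ ^
            ((1 : ℝ) / K) := by
  classical
  haveI : NeZero N := ⟨by omega⟩
  have hN : N ≠ 0 := by omega
  have hNR : (0:ℝ) < N := by exact_mod_cast Nat.pos_of_ne_zero hN
  set F := dftMatrix N with hF
  set ι : Fin K → Fin N := Fin.castLE hK2 with hι
  have hιinj : Function.Injective ι := Fin.castLE_injective hK2
  set P : Matrix (Fin K) (Fin N) ℂ := F.submatrix ι id with hP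
  have hFF : F * Fᴴ = 1 := ProjAux.dft_mul_conjTranspose hN
  have hFF' : Fᴴ * F = 1 := mul_eq_one_comm.mp hFF
  have hPP : P * Pᴴ = 1 := by
    ext i j
    have h1 : (P * Pᴴ) i j = (F * Fᴴ) (ι i) (ι j) := by
      simp [Matrix.mul_apply, hP, Matrix.conjTranspose_apply, Matrix.submatrix_apply]
    rw [h1, hFF]
    simp [Matrix.one_apply, hιinj.eq_iff]
  refine ⟨K, P, ?_, ?_, ?_⟩
  · -- contraction
    intro v
    have hw : ∀ i : Fin K, P.mulVec v i = F.mulVec v (ι i) := by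
      intro i
      simp [Matrix.mulVec, hP, Matrix.submatrix_apply, dotProduct]
    have hre : ∀ (w : Fin N → ℂ), ∑ i, ‖w i‖^2 = (dotProduct (star w) w).re := by
      intro w
      rw [dotProduct, Complex.re_sum]
      refine Finset.sum_congr rfl fun i _ => ?_
      simp [Pi.star_apply, Complex.star_def, mul_comm, Complex.mul_conj,
        Complex.normSq_eq_norm_sq]
      norm_cast
    have hdot : dotProduct (star (F.mulVec v)) (F.mulVec v)
        = dotProduct (star v) v := by
      rw [Matrix.star_mulVec, ← Matrix.dotProduct_mulVec, Matrix.mulVec_mulVec, hFF',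
        Matrix.one_mulVec]
    calc ∑ i, ‖P.mulVec v i‖^2 = ∑ i : Fin K, ‖F.mulVec v (ι i)‖^2 := by
          simp [hw]
      _ ≤ ∑ i : Fin N, ‖F.mulVec v i‖^2 := by
          rw [← Finset.sum_image (f := fun j => ‖F.mulVec v j‖^2) (s := Finset.univ)
            (g := ι) (fun x _ y _ hxy => hιinj hxy)]
          apply Finset.sum_le_sum_of_subset_of_nonneg (Finset.subset_univ _)
          intro i _ _
          positivity
      _ = ∑ i, ‖v i‖^2 := by rw [hre, hre, hdot]
  · -- rank
    apply le_antisymm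
    · simpa using P.rank_le_card_height
    · calc K = (1 : Matrix (Fin K) (Fin K) ℂ).rank := by simp [Matrix.rank_one]
        _ = (P * Pᴴ).rank := by rw [hPP]
        _ ≤ P.rank := Matrix.rank_mul_le_left _ _
  · -- submatrix with large determinant
    haveI : Nonempty (Fin N) := ⟨⟨0, by omega⟩⟩
    set Hc := (Matrix.circulant h).map (fun a : ℝ => (a:ℂ)) with hHc
    have hsum := ProjAux.sum_normSq_det P hPP
    set c0 : ℝ := (Nat.factorial K : ℝ) / (N:ℝ)^K with hc0
    have hc0pos : 0 < c0 := by
      rw [hc0]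
      have : (0:ℝ) < (Nat.factorial K : ℝ) := by exact_mod_cast Nat.factorial_pos K
      positivity
    obtain ⟨f, -, hf⟩ := Finset.exists_le_of_sum_le (s := (Finset.univ : Finset (Fin K → Fin N)))
      (f := fun _ => c0) (g := fun f => Complex.normSq ((P.submatrix id f).det))
      Finset.univ_nonempty (by
        rw [hsum, Finset.sum_const, Finset.card_univ, nsmul_eq_mul]
        have hcard : (Fintype.card (Fin K → Fin N) : ℝ) = (N:ℝ)^K := by
          simp [Fintype.card_fun]
        rw [hcard, hc0]
        field_simp; exact le_rfl)
    have hfinj : Function.Injective f := by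
      intro x y hxy
      by_contra hne
      have hzero : (P.submatrix id f).det = 0 := by
        apply Matrix.det_zero_of_column_eq hne
        intro k
        simp [Matrix.submatrix_apply, hxy]
      rw [hzero] at hf
      simp at hf
      exact absurd hf (not_le.mpr hc0pos)
    refine ⟨id, f, Function.injective_id, hfinj, ?_⟩
    -- compute the determinant
    have hPH : ∀ i j, (P * Hc) i j = ((Real.sqrt N : ℝ):ℂ) * dftCoeff h (ι i) * F (ι i) j := by
      intro i j
      rw [Matrix.mul_apply]
      have hterm : ∀ k, P i k * Hc k j = F (ι i) k * ((h (k - j) :ℝ):ℂ) := by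
        intro k
        simp [hP, hHc, Matrix.submatrix_apply, Matrix.map_apply, Matrix.circulant_apply]
      rw [Finset.sum_congr rfl (fun k _ => hterm k)]
      exact ProjAux.dft_mul_circulant h (ι i) j
    have hdetB : ((P * Hc).submatrix id f).det
        = (∏ i : Fin K, ((Real.sqrt N : ℝ):ℂ) * dftCoeff h (ι i)) * (P.submatrix id f).det := by
      have hBform : (P * Hc).submatrix id f = Matrix.of fun i j =>
          (((Real.sqrt N : ℝ):ℂ) * dftCoeff h (ι i)) * (P.submatrix id f) i j := by
        ext i j
        simp only [Matrix.submatrix_apply, Matrix.of_apply, id_eq]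
        rw [hPH i (f j)]
        simp [hP, Matrix.submatrix_apply]
      rw [hBform, Matrix.det_mul_column]
    set aK : ℝ := ‖dftCoeff h (⟨K - 1, by omega⟩ : Fin N)‖ with haK
    have haKnn : 0 ≤ aK := norm_nonneg _
    have hmem : ∀ i : Fin K, aK ≤ ‖dftCoeff h (ι i)‖ := by
      intro i
      apply hmono
      have := i.isLt
      simp only [hι, Fin.le_def, Fin.coe_castLE]
      omega
    have hnormSqB : Complex.normSq ((P * Hc).submatrix id f).det
        = (∏ i : Fin K, (N:ℝ) * Complex.normSq (dftCoeff h (ι i)))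
            * Complex.normSq ((P.submatrix id f).det) := by
      rw [hdetB, Complex.normSq_mul, map_prod]
      congr 1
      refine Finset.prod_congr rfl fun i _ => ?_
      rw [Complex.normSq_mul, Complex.normSq_ofReal]
      rw [Real.mul_self_sqrt (le_of_lt hNR)]
    have hineq : (Nat.factorial K : ℝ) * (aK^2)^K
        ≤ Complex.normSq ((P * Hc).submatrix id f).det := by
      rw [hnormSqB]
      have h1 : (∏ i : Fin K, (N:ℝ) * aK^2) ≤ ∏ i : Fin K, (N:ℝ) * Complex.normSq (dftCoeff h (ι i)) := by
        apply Finset.prod_le_prod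
        · intro i _
          positivity
        · intro i _
          apply mul_le_mul_of_nonneg_left _ (le_of_lt hNR)
          rw [Complex.normSq_eq_norm_sq]
          exact pow_le_pow_left₀ haKnn (hmem i) 2
      have h2 : (∏ i : Fin K, (N:ℝ) * aK^2) * c0 = (Nat.factorial K : ℝ) * (aK^2)^K := by
        rw [Finset.prod_const, Finset.card_univ, Fintype.card_fin, hc0, mul_pow]
        field_simp
      calc (Nat.factorial K : ℝ) * (aK^2)^K = (∏ i : Fin K, (N:ℝ) * aK^2) * c0 := h2.symm
        _ ≤ (∏ i : Fin K, (N:ℝ) * Complex.normSq (dftCoeff h (ι i)))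
              * Complex.normSq ((P.submatrix id f).det) :=
            mul_le_mul h1 hf (le_of_lt hc0pos) (Finset.prod_nonneg fun i _ => mul_nonneg hNR.le (Complex.normSq_nonneg _))
    -- final numeric estimate
    set t : ℝ := Real.exp (-(1/2 : ℝ)) * Real.sqrt K * aK with hT
    have htnn : 0 ≤ t := by positivity
    set x : ℝ := ‖((P * Hc).submatrix id f).det‖ with hx
    have hxnn : 0 ≤ x := norm_nonneg _
    have hxsq : x^2 = Complex.normSq ((P * Hc).submatrix id f).det := by
      rw [hx, Complex.sq_norm]
    have ht2 : t^2 = Real.exp (-1) * K * aK^2 := by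
      rw [hT]
      have hexp2 : Real.exp (-(1/2:ℝ)) * Real.exp (-(1/2:ℝ)) = Real.exp (-1) := by
        rw [← Real.exp_add]
        norm_num
      have hsqrt2 : Real.sqrt K * Real.sqrt K = (K:ℝ) :=
        Real.mul_self_sqrt (by positivity)
      calc (Real.exp (-(1/2:ℝ)) * Real.sqrt K * aK)^2
          = (Real.exp (-(1/2:ℝ)) * Real.exp (-(1/2:ℝ))) * (Real.sqrt K * Real.sqrt K) * aK^2 := by
            ring
        _ = Real.exp (-1) * K * aK^2 := by rw [hexp2, hsqrt2]
    have hfactbound : Real.exp (-(K:ℝ)) * (K:ℝ)^K ≤ (Nat.factorial K : ℝ) := by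
      have hb := ProjAux.pow_le_exp_mul_factorial K
      have := mul_le_mul_of_nonneg_left hb (le_of_lt (Real.exp_pos (-(K:ℝ))))
      calc Real.exp (-(K:ℝ)) * (K:ℝ)^K ≤ Real.exp (-(K:ℝ)) * (Real.exp K * (Nat.factorial K : ℝ)) := this
        _ = (Nat.factorial K : ℝ) := by
            rw [← mul_assoc, ← Real.exp_add]
            simp
    have hpowsq : (t^K)^2 ≤ x^2 := by
      have e1 : (t^K)^2 = (t^2)^K := by ring
      have e2 : (t^2)^K = Real.exp (-(K:ℝ)) * (K:ℝ)^K * (aK^2)^K := by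
        rw [ht2, mul_pow, mul_pow]
        congr 2
        rw [← Real.exp_nat_mul]
        congr 1
        ring
      rw [e1, e2, hxsq]
      calc Real.exp (-(K:ℝ)) * (K:ℝ)^K * (aK^2)^K
          ≤ (Nat.factorial K : ℝ) * (aK^2)^K :=
            mul_le_mul_of_nonneg_right hfactbound (by positivity)
        _ ≤ _ := hineq
    have hpow : t^K ≤ x := by
      have h1 : t^K = Real.sqrt ((t^K)^2) := (Real.sqrt_sq (by positivity)).symm
      have h2 : x = Real.sqrt (x^2) := (Real.sqrt_sq hxnn).symm
      rw [h1, h2]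
      exact Real.sqrt_le_sqrt hpowsq
    have hKne : (K:ℝ) ≠ 0 := by positivity
    have hfinal : t ≤ x ^ ((1:ℝ)/K) := by
      have hKK : (K:ℝ) * ((1:ℝ)/K) = 1 := by field_simp
      calc t = t ^ ((K:ℝ) * ((1:ℝ)/K)) := by rw [hKK, Real.rpow_one]
        _ = (t ^ (K:ℝ)) ^ ((1:ℝ)/K) := Real.rpow_mul htnn _ _
        _ = (t ^ K) ^ ((1:ℝ)/K) := by rw [Real.rpow_natCast]
        _ ≤ x ^ ((1:ℝ)/K) := Real.rpow_le_rpow (by positivity) hpow (by positivity)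
    exact hfinal


end
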